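/- Let z₁, …, zₙ be distinct complex numbers with p(zᵢ) = zᵢ and p'(zᵢ) = αᵢ. For 2 ≤ k ≤ n - 1, the divided difference satisfies f[z₁, z₁, …, z_k, z_k, z_{k+1}] = Σ_{i=1}^{k} (αᵢ - 1)(zᵢ - z_{k+1})/π^{k+1}_i, where π^{k+1}_i = ∏_{j=1, j≠i}^{k+1} (zᵢ - zⱼ)². -/

import Mathlib

open Polynomial Finset

/-- Divided differences with possibly repeated (adjacent) nodes:
`g` gives the function values and `d` the derivative values at doubled nodes. -/
noncomputable def dd (g d : ℂ → ℂ) : List ℂ → ℂ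
  | [] => 0
  | [z] => g z
  | [z, w] => if z = w then d z else (g w - g z) / (w - z)
  | z :: w :: u :: rest =>
    (dd g d (w :: u :: rest) - dd g d ((z :: w :: u :: rest).dropLast)) /
      ((u :: rest).getLast (by simp) - z)
termination_by l => l.length

lemma dd_step (g d : ℂ → ℂ) (L : List ℂ) (h : 3 ≤ L.length) :
    dd g d L = (dd g d L.tail - dd g d L.dropLast) /
      (L.getLast (by rintro rfl; simp at h) - L.head (by rintro rfl; simp at h)) := by
  match L with
  | a :: b :: c :: rest =>
    rw [dd]
    congr 1

noncomputable def Sm (z β : ℕ → ℂ) (k : ℕ) (m : ℕ → ℕ) : ℂ :=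
  ∑ i ∈ (Finset.range (k+1)).filter (fun i => m i = 2),
    β i / ∏ j ∈ (Finset.range (k+1)).erase i, (z i - z j) ^ (m j)

lemma Sm_shift (z β : ℕ → ℂ) (k : ℕ)
    (hz : ∀ i < k+1, ∀ j < k+1, z i = z j → i = j)
    (m : ℕ → ℕ) (A : ℕ) (hA : A < k+1) (hmA1 : 1 ≤ m A) (hmA2 : m A ≤ 2) :
    Sm z β k (fun j => m j - if j = A then 1 else 0) =
      ∑ i ∈ (Finset.range (k+1)).filter (fun i => m i = 2),
        (β i / ∏ j ∈ (Finset.range (k+1)).erase i, (z i - z j) ^ (m j)) * (z i - z A) := by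
  unfold Sm
  rw [show ((Finset.range (k+1)).filter (fun i => (m i - if i = A then 1 else 0) = 2))
      = ((Finset.range (k+1)).filter (fun i => m i = 2)).erase A from by
    ext i
    simp only [Finset.mem_filter, Finset.mem_erase, Finset.mem_range]
    constructor
    · rintro ⟨h1, h2⟩
      have : i ≠ A := by rintro rfl; simp at h2; omega
      simp [this] at h2
      exact ⟨this, h1, h2⟩
    · rintro ⟨h1, h2, h3⟩
      simp [h1]
      exact ⟨by omega, h3⟩]
  rw [← Finset.sum_erase ((Finset.range (k+1)).filter (fun i => m i = 2))
    (f := fun i => (β i / ∏ j ∈ (Finset.range (k+1)).erase i, (z i - z j) ^ (m j)) * (z i - z A))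
    (a := A) (by simp)]
  apply Finset.sum_congr rfl
  intro i hie
  have hiA : i ≠ A := (Finset.mem_erase.mp hie).1
  have hi := Finset.mem_of_mem_erase hie
  simp only [Finset.mem_filter, Finset.mem_range] at hi
  · have hmemA : A ∈ (Finset.range (k+1)).erase i := by
      simp [Finset.mem_erase, Ne.symm hiA, hA]
    have hx : z i - z A ≠ 0 := by
      intro h
      exact hiA (hz i hi.1 A hA (by linear_combination h))
    rw [← Finset.mul_prod_erase _ _ hmemA, ← Finset.mul_prod_erase _ _ hmemA]
    have hprodcongr : ∏ j ∈ ((Finset.range (k+1)).erase i).erase A,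
        (z i - z j) ^ (m j - if j = A then 1 else 0)
        = ∏ j ∈ ((Finset.range (k+1)).erase i).erase A, (z i - z j) ^ (m j) := by
      apply Finset.prod_congr rfl
      intro j hj
      have : j ≠ A := (Finset.mem_erase.mp hj).1
      simp [this]
    rw [hprodcongr]
    have hpow : (z i - z A) ^ (m A) = (z i - z A) ^ (m A - 1) * (z i - z A) := by
      rw [← pow_succ]
      congr 1
      omega
    beta_reduce
    rw [if_pos rfl, hpow]
    have hrest : ∏ j ∈ ((Finset.range (k+1)).erase i).erase A, (z i - z j) ^ (m j) ≠ 0 := by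
      apply Finset.prod_ne_zero_iff.mpr
      intro j hj
      apply pow_ne_zero
      intro h
      have hj1 := Finset.mem_erase.mp hj
      have hj2 := Finset.mem_erase.mp hj1.2
      exact (Ne.symm hj2.1) (hz i hi.1 j (Finset.mem_range.mp hj2.2) (by linear_combination h))
    field_simp

lemma Sm_rec (z β : ℕ → ℂ) (k : ℕ)
    (hz : ∀ i < k+1, ∀ j < k+1, z i = z j → i = j)
    (m : ℕ → ℕ) (A B : ℕ) (hA : A < k+1) (hB : B < k+1)
    (hmA1 : 1 ≤ m A) (hmA2 : m A ≤ 2) (hmB1 : 1 ≤ m B) (hmB2 : m B ≤ 2) :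
    Sm z β k (fun j => m j - if j = A then 1 else 0)
      - Sm z β k (fun j => m j - if j = B then 1 else 0)
      = (z B - z A) * Sm z β k m := by
  rw [Sm_shift z β k hz m A hA hmA1 hmA2, Sm_shift z β k hz m B hB hmB1 hmB2]
  unfold Sm
  rw [← Finset.sum_sub_distrib, Finset.mul_sum]
  apply Finset.sum_congr rfl
  intro i _
  ring

def mwin (a n j : ℕ) : ℕ := ((Finset.Ico a (a+n)).filter (fun t => t / 2 = j)).card

lemma mwin_eq (a n j : ℕ) : mwin a n j = min (a+n) (2*j+2) - max a (2*j) := by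
  unfold mwin
  rw [show ((Finset.Ico a (a+n)).filter (fun t => t / 2 = j))
      = Finset.Ico (max a (2*j)) (min (a+n) (2*j+2)) from by
    ext t
    simp only [Finset.mem_filter, Finset.mem_Ico]
    omega]
  rw [Nat.card_Ico]

-- list lemmas
lemma wlist_cons (z : ℕ → ℂ) (a n : ℕ) :
    (List.range' a (n+1)).map (fun t => z (t/2)) =
      z (a/2) :: (List.range' (a+1) n).map (fun t => z (t/2)) := by
  rw [List.range'_succ]; rfl

lemma wlist_dropLast (z : ℕ → ℂ) (a n : ℕ) :
    ((List.range' a (n+1)).map (fun t => z (t/2))).dropLast =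
      (List.range' a n).map (fun t => z (t/2)) := by
  rw [List.range'_concat, List.map_append]
  simp

lemma wlist_getLast (z : ℕ → ℂ) (a n : ℕ) (h : (List.range' a (n+1)).map (fun t => z (t/2)) ≠ []) :
    ((List.range' a (n+1)).map (fun t => z (t/2))).getLast h = z ((a+n)/2) := by
  rw [List.getLast_eq_getElem]
  simp

lemma dd_window (z β : ℕ → ℂ) (k : ℕ)
    (hz : ∀ i < k+1, ∀ j < k+1, z i = z j → i = j)
    (f fd : ℂ → ℂ)
    (hf : ∀ i < k+1, f (z i) = 0) (hfd : ∀ i < k+1, fd (z i) = β i) :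
    ∀ n a, a + n ≤ 2*k+1 →
      dd f fd ((List.range' a n).map (fun t => z (t/2))) = Sm z β k (mwin a n) := by
  intro n
  induction n using Nat.strong_induction_on with
  | _ n ih =>
  rcases n with _ | n
  · -- n = 0
    intro a _
    have h0 : (Finset.range (k+1)).filter (fun i => mwin a 0 i = 2) = ∅ := by
      ext i; simp [mwin_eq]; try omega
    unfold Sm
    rw [h0]
    simp [dd]
  rcases n with _ | n
  · -- n = 1
    intro a ha
    have h0 : (Finset.range (k+1)).filter (fun i => mwin a 1 i = 2) = ∅ := by
      ext i; simp [mwin_eq]; try omega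
    unfold Sm
    rw [h0]
    simp [dd, hf (a/2) (by omega)]
  rcases n with _ | n
  · -- n = 2
    intro a ha
    obtain ⟨c, hc | hc⟩ := Nat.even_or_odd' a
    · -- a = 2*c : doubled node
      have hc2 : a / 2 = c := by omega
      have hc1 : (a+1) / 2 = c := by omega
      have hck : c < k + 1 := by omega
      rw [show (List.range' a 2).map (fun t => z (t/2)) = [z c, z c] from by
        simp [List.range', hc1, hc2]]
      rw [dd, if_pos rfl, hfd c hck]
      have h0 : (Finset.range (k+1)).filter (fun i => mwin a 2 i = 2) = {c} := by
        ext i; simp [mwin_eq, Finset.mem_filter]; try omega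
      unfold Sm
      rw [h0, Finset.sum_singleton]
      rw [Finset.prod_eq_one, div_one]
      intro j hj
      have : mwin a 2 j = 0 := by
        have := Finset.mem_erase.mp hj
        rw [mwin_eq]; omega
      rw [this, pow_zero]
    · -- a = 2*c+1 : two distinct nodes
      have hc2 : a / 2 = c := by omega
      have hc1 : (a+1) / 2 = c + 1 := by omega
      have hck : c + 1 < k + 1 := by omega
      rw [show (List.range' a 2).map (fun t => z (t/2)) = [z c, z (c+1)] from by
        simp [List.range', hc1, hc2]]
      have hne : z c ≠ z (c+1) := fun h => by
        have := hz c (by omega) (c+1) hck h; omega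
      rw [dd, if_neg hne, hf c (by omega), hf (c+1) hck]
      have h0 : (Finset.range (k+1)).filter (fun i => mwin a 2 i = 2) = ∅ := by
        ext i; simp [mwin_eq]; try omega
      unfold Sm
      rw [h0]
      simp
  · -- n+3 : recursive step
    intro a ha
    have hlen : 3 ≤ ((List.range' a (n+3)).map (fun t => z (t/2))).length := by simp
    rw [dd_step f fd _ hlen]
    have htail : ((List.range' a (n+3)).map (fun t => z (t/2))).tail
        = (List.range' (a+1) (n+2)).map (fun t => z (t/2)) := by
      rw [wlist_cons]
      rfl
    have hdrop := wlist_dropLast z a (n+2)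
    have hlast : ((List.range' a (n+3)).map (fun t => z (t/2))).getLast
        (by rintro h; rw [h] at hlen; simp at hlen) = z ((a+n+2)/2) := by
      rw [wlist_getLast]
      congr 1
    have hhead : ((List.range' a (n+3)).map (fun t => z (t/2))).head
        (by rintro h; rw [h] at hlen; simp at hlen) = z (a/2) := by
      simp [wlist_cons]
    rw [htail, hdrop, hlast, hhead]
    rw [ih (n+2) (by omega) (a+1) (by omega), ih (n+2) (by omega) a (by omega)]
    have hfront : mwin (a+1) (n+2) = fun j => mwin a (n+3) j - if j = a/2 then 1 else 0 := by
      funext j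
      simp only [mwin_eq]
      split_ifs with h <;> omega
    have hback : mwin a (n+2) = fun j => mwin a (n+3) j - if j = (a+n+2)/2 then 1 else 0 := by
      funext j
      simp only [mwin_eq]
      split_ifs with h <;> omega
    rw [hfront, hback,
      Sm_rec z β k hz (mwin a (n+3)) (a/2) ((a+n+2)/2) (by omega) (by omega)
        (by rw [mwin_eq]; omega) (by rw [mwin_eq]; omega)
        (by rw [mwin_eq]; omega) (by rw [mwin_eq]; omega)]
    rw [mul_div_cancel_left₀]
    intro h
    have h2 : z ((a+n+2)/2) = z (a/2) := by linear_combination h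
    have := hz ((a+n+2)/2) (by omega) (a/2) (by omega) h2
    omega
lemma dd_id_two (a b : ℂ) : dd (fun w => w) (fun _ => 1) [a, b] = 1 := by
  rw [dd]
  split
  · rfl
  · rw [div_self]
    intro h
    rename_i hne
    exact hne (by linear_combination -h)

lemma dd_id : ∀ (L : List ℂ), 3 ≤ L.length → dd (fun w => w) (fun _ => 1) L = 0
  | [] => fun h => by simp at h
  | [a] => fun h => by simp at h
  | [a, b] => fun h => by simp at h
  | a :: b :: c :: rest => fun _ => by
      rw [dd]
      match rest with
      | [] => simp [dd_id_two, List.dropLast]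
      | x :: xs =>
          rw [dd_id (b :: c :: x :: xs) (by simp),
            show ((a :: b :: c :: x :: xs).dropLast) = a :: b :: (c :: x :: xs).dropLast from rfl,
            dd_id (a :: b :: (c :: x :: xs).dropLast) (by simp)]
          simp
termination_by L => L.length
decreasing_by
  · simp
  · simp [List.length_dropLast]
lemma dd_add (g₁ d₁ g₂ d₂ : ℂ → ℂ) : ∀ (L : List ℂ),
    dd (fun w => g₁ w + g₂ w) (fun w => d₁ w + d₂ w) L = dd g₁ d₁ L + dd g₂ d₂ L
  | [] => by simp [dd]
  | [a] => by simp [dd]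
  | [a, b] => by
      simp only [dd]
      split <;> ring
  | a :: b :: c :: rest => by
      rw [dd, dd, dd, dd_add g₁ d₁ g₂ d₂ (b :: c :: rest),
        dd_add g₁ d₁ g₂ d₂ ((a :: b :: c :: rest).dropLast)]
      ring
termination_by L => L.length


lemma flat_eq (z : ℕ → ℂ) : ∀ k : ℕ,
    ((List.range k).flatMap fun i => [z i, z i]) = (List.range' 0 (2*k)).map (fun t => z (t/2)) := by
  intro k
  induction k with
  | zero => simp
  | succ k ih =>
    rw [List.range_succ, List.flatMap_append, ih,
      show 2*(k+1) = 2*k+1+1 from by ring, List.range'_concat, List.range'_concat,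
      List.map_append, List.map_append]
    simp
    congr 1
    omega

/-- Statement (7): `f[z₁,z₁,…,z_k,z_k,z_{k+1}] = Σ_{i=1}^k (αᵢ-1)(zᵢ-z_{k+1})/πᵢ^{k+1}`.
(Indices `0,…,k`.) -/
theorem divided_difference_doubled_plus_one (n : ℕ) (p : ℂ[X]) (z : ℕ → ℂ)
    (hz : ∀ i < n, ∀ j < n, z i = z j → i = j)
    (hfix : ∀ i < n, p.eval (z i) = z i)
    (α : ℕ → ℂ) (hα : ∀ i < n, p.derivative.eval (z i) = α i) :
    ∀ k, 2 ≤ k → k ≤ n - 1 →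
      dd (fun w => p.eval w) (fun w => p.derivative.eval w)
          (((List.range k).flatMap fun i => [z i, z i]) ++ [z k]) =
        ∑ i ∈ Finset.range k,
          (α i - 1) * (z i - z k) /
            ∏ j ∈ (Finset.range (k + 1)).erase i, (z i - z j) ^ 2 := by
  intro k hk2 hkn
  have hn3 : 3 ≤ n := by omega
  have hkn' : k + 1 ≤ n := by omega
  have hz' : ∀ i < k+1, ∀ j < k+1, z i = z j → i = j :=
    fun i hi j hj h => hz i (by omega) j (by omega) h
  -- rewrite the list as a window
  have hlist : ((List.range k).flatMap fun i => [z i, z i]) ++ [z k]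
      = (List.range' 0 (2*k+1)).map (fun t => z (t/2)) := by
    rw [flat_eq, List.range'_concat, List.map_append]
    congr 2
    simp
    try omega
  rw [hlist]
  -- split off the identity part
  have e1 : (fun w : ℂ => p.eval w) = (fun w => (p.eval w - w) + w) := by funext w; ring
  have e2 : (fun w : ℂ => p.derivative.eval w)
      = (fun w => (p.derivative.eval w - 1) + 1) := by funext w; ring
  rw [e1, e2, dd_add (fun w => p.eval w - w) (fun w => p.derivative.eval w - 1)
    (fun w => w) (fun _ => 1)]
  rw [dd_id _ (by simp; omega), add_zero]
  -- apply the window formula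
  have hwin := dd_window z (fun i => α i - 1) k hz'
    (fun w => p.eval w - w) (fun w => p.derivative.eval w - 1)
    (fun i hi => by show eval (z i) p - z i = 0; rw [hfix i (by omega)]; ring)
    (fun i hi => by show eval (z i) (derivative p) - 1 = α i - 1; rw [hα i (by omega)])
    (2*k+1) 0 (by omega)
  rw [hwin]
  -- identify the sum
  unfold Sm
  rw [show (Finset.range (k+1)).filter (fun i => mwin 0 (2*k+1) i = 2) = Finset.range k from by
    ext i; simp [mwin_eq]; omega]
  apply Finset.sum_congr rfl
  intro i hi
  have hik : i < k := Finset.mem_range.mp hi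
  have hkmem : k ∈ (Finset.range (k+1)).erase i := by
    simp [Finset.mem_erase]
    omega
  have hzik : z i - z k ≠ 0 := by
    intro h
    have := hz i (by omega) k (by omega) (by linear_combination h)
    omega
  rw [← Finset.mul_prod_erase _ _ hkmem, ← Finset.mul_prod_erase _ _ hkmem]
  have hmk : mwin 0 (2*k+1) k = 1 := by rw [mwin_eq]; omega
  rw [hmk, pow_one]
  have hrw : ∏ j ∈ ((Finset.range (k+1)).erase i).erase k, (z i - z j) ^ (mwin 0 (2*k+1) j)
      = ∏ j ∈ ((Finset.range (k+1)).erase i).erase k, (z i - z j) ^ 2 := by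
    apply Finset.prod_congr rfl
    intro j hj
    have h1 := Finset.mem_erase.mp hj
    have h2 := Finset.mem_erase.mp h1.2
    have : mwin 0 (2*k+1) j = 2 := by
      rw [mwin_eq]
      have := Finset.mem_range.mp h2.2
      omega
    rw [this]
  rw [hrw]
  have hR : ∏ j ∈ ((Finset.range (k+1)).erase i).erase k, (z i - z j) ^ 2 ≠ 0 := by
    apply Finset.prod_ne_zero_iff.mpr
    intro j hj
    apply pow_ne_zero
    intro h
    have h1 := Finset.mem_erase.mp hj
    have h2 := Finset.mem_erase.mp h1.2
    exact (Ne.symm h2.1) (hz i (by omega) j (by have := Finset.mem_range.mp h2.2; omega)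
      (by linear_combination h))
  field_simp
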